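/- Let φ be a strictly convex norm of class C¹ away from 0 on ℝⁿ, S = {x : φ(x) = 1}, ξ(x) = x/φ(x), and π(η) = Dξ(η) for η ∈ S. Fix 0 < ε < 1 and let R be the supremum of r ∈ (0,1) such that ‖π(η) − π(ζ)‖_φ ≤ 1 − ε whenever η, ζ ∈ S with φ(η − ζ) ≤ r. Then for every η ∈ S the map π(η) restricted to S ∩ {ζ : φ(ζ − η) ≤ R} is injective. -/

import Mathlib

open Set Filter Metric MeasureTheory Topology ENNReal

noncomputable section

abbrev Euc (n : ℕ) := EuclideanSpace ℝ (Fin n)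

def IsNorm {n : ℕ} (φ : Euc n → ℝ) : Prop :=
  (∀ x, φ x = 0 ↔ x = 0) ∧ (∀ (c : ℝ) (x : Euc n), φ (c • x) = |c| * φ x) ∧
    (∀ x y, φ (x + y) ≤ φ x + φ y)

def StrictlyConvexNorm {n : ℕ} (φ : Euc n → ℝ) : Prop :=
  IsNorm φ ∧ ∀ a b, φ (a + b) = φ a + φ b → φ b • a = φ a • b

def UniformlyConvexNorm {n : ℕ} (φ : Euc n → ℝ) : Prop :=
  IsNorm φ ∧ ∃ γ : ℝ, 0 < γ ∧ ConvexOn ℝ Set.univ (fun x => φ x - γ * ‖x‖)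

def distφ {n : ℕ} (φ : Euc n → ℝ) (K : Set (Euc n)) (x : Euc n) : ℝ :=
  sInf {r | ∃ y ∈ K, r = φ (x - y)}

def nearφ {n : ℕ} (φ : Euc n → ℝ) (K : Set (Euc n)) (x : Euc n) : Set (Euc n) :=
  {a ∈ K | φ (x - a) = distφ φ K x}

def rhoφ {n : ℕ} (φ : Euc n → ℝ) (K : Set (Euc n)) (x : Euc n) : ℝ≥0∞ :=
  sSup {r : ℝ≥0∞ | ∃ s : ℝ, ∃ a ∈ nearφ φ K x,
    r = ENNReal.ofReal s ∧ distφ φ K (a + s • (x - a)) = s * distφ φ K x}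

def normalBundle {n : ℕ} (φ : Euc n → ℝ) (K : Set (Euc n)) : Set (Euc n × Euc n) :=
  {p | p.1 ∈ K ∧ φ p.2 = 1 ∧ ∃ s : ℝ, 0 < s ∧ distφ φ K (p.1 + s • p.2) = s}

def reachφ {n : ℕ} (φ : Euc n → ℝ) (K : Set (Euc n)) (p : Euc n × Euc n) : ℝ≥0∞ :=
  sSup {r : ℝ≥0∞ | ∃ s : ℝ, 0 < s ∧ r = ENNReal.ofReal s ∧ distφ φ K (p.1 + s • p.2) = s}

def cutLocus {n : ℕ} (φ : Euc n → ℝ) (K : Set (Euc n)) : Set (Euc n) :=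
  {x | ∃ p ∈ normalBundle φ K, reachφ φ K p ≠ ⊤ ∧
    x = p.1 + (reachφ φ K p).toReal • p.2}

def PtTwiceDiffAt {n : ℕ} (f : Euc n → ℝ) (x : Euc n) : Prop :=
  ∃ (L : Euc n →L[ℝ] ℝ) (Q : Euc n →L[ℝ] Euc n →L[ℝ] ℝ),
    Tendsto (fun y => |f y - f x - L (y - x) - Q (y - x) (y - x)| / ‖y - x‖ ^ 2)
      (𝓝[≠] x) (𝓝 0)


lemma slope_bound' {n : ℕ} {φ : Euc n → ℝ} {x w : Euc n} {D : Euc n →L[ℝ] ℝ}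
    (hD : HasFDerivAt φ D x) {B : ℝ}
    (hB : ∀ s : ℝ, 0 < s → s < 1 → (φ (x + s • w) - φ x) / s ≤ B) : D w ≤ B := by
  have hline : HasDerivAt (fun s : ℝ => x + s • w) w 0 := by
    simpa using ((hasDerivAt_id (0:ℝ)).smul_const w).const_add x
  have hx0 : (fun s : ℝ => x + s • w) 0 = x := by simp
  have hg : HasDerivAt (fun s : ℝ => φ (x + s • w)) (D w) 0 := by
    have hD' : HasFDerivAt φ D ((fun s : ℝ => x + s • w) 0) := by rw [hx0]; exact hD
    exact hD'.comp_hasDerivAt 0 hline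
  have hslope := hasDerivAt_iff_tendsto_slope.1 hg
  have h2 : Tendsto (slope (fun s : ℝ => φ (x + s • w)) 0) (𝓝[>] 0) (𝓝 (D w)) :=
    hslope.mono_left (nhdsWithin_mono 0 (fun s hs => ne_of_gt hs))
  refine le_of_tendsto h2 ?_
  filter_upwards [Ioo_mem_nhdsGT_of_mem (by norm_num : (0:ℝ) ∈ Ico (0:ℝ) 1)] with s hs
  rw [slope_def_field]
  simpa [div_eq_inv_mul] using hB s hs.1 hs.2

lemma keyAux' {n : ℕ} {φ : Euc n → ℝ} (hφ : StrictlyConvexNorm φ)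
    {η ζ : Euc n} {t : ℝ} (hD : HasFDerivAt φ (fderiv ℝ φ ζ) ζ)
    (hη : φ η = 1) (hζ : φ ζ = 1) (ht : 0 < t) (hζ' : φ (ζ + t • η) = 1)
    (hle : φ (ζ - η) ≤ 1) : False := by
  obtain ⟨⟨hzero, hhomog, htri⟩, hstrict⟩ := hφ
  set D := fderiv ℝ φ ζ with hDdef
  have hlip : ∀ w, D w ≤ φ w := by
    intro w
    refine slope_bound' hD (fun s hs0 _ => ?_)
    have h1 : φ (ζ + s • w) ≤ φ ζ + s * φ w := by
      calc φ (ζ + s • w) ≤ φ ζ + φ (s • w) := htri _ _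
        _ = φ ζ + s * φ w := by rw [hhomog, abs_of_pos hs0]
    rw [div_le_iff₀ hs0]
    nlinarith
  have hEuler : D ζ = 1 := by
    have hge : D (-ζ) ≤ -1 := by
      refine slope_bound' hD (fun s hs0 hs1 => ?_)
      have h1 : ζ + s • (-ζ) = (1 - s) • ζ := by
        rw [sub_smul, one_smul, smul_neg]; abel
      rw [h1, hhomog, abs_of_pos (by linarith), hζ]
      rw [div_le_iff₀ hs0]; ring_nf; nlinarith
    have := hlip ζ
    rw [map_neg] at hge
    rw [hζ] at this
    linarith
  have hsub : D (t • η) ≤ 0 := by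
    refine slope_bound' hD (fun s hs0 hs1 => ?_)
    have h1 : ζ + s • (t • η) = (1 - s) • ζ + s • (ζ + t • η) := by
      rw [sub_smul, one_smul, smul_add]; abel
    have h2 : φ (ζ + s • (t • η)) ≤ (1 - s) * φ ζ + s * φ (ζ + t • η) := by
      rw [h1]
      calc φ ((1 - s) • ζ + s • (ζ + t • η)) ≤ φ ((1-s)•ζ) + φ (s • (ζ + t•η)) := htri _ _
        _ = (1 - s) * φ ζ + s * φ (ζ + t • η) := by
            rw [hhomog, hhomog, abs_of_pos hs0, abs_of_pos (by linarith)]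
    rw [div_le_iff₀ hs0]
    rw [hζ, hζ'] at h2
    nlinarith
  have hc : D η ≤ 0 := by
    rw [ContinuousLinearMap.map_smul] at hsub
    simp only [smul_eq_mul] at hsub
    nlinarith
  have h1c : 1 - D η ≤ φ (ζ - η) := by
    have := hlip (ζ - η)
    rw [map_sub, hEuler] at this
    linarith
  have hceq : D η = 0 := le_antisymm hc (by linarith)
  have hφeq : φ (ζ - η) = 1 := le_antisymm hle (by linarith)
  have h2 : (2:ℝ) ≤ φ (ζ + (ζ - η)) := by
    have := hlip (ζ + (ζ - η))
    rw [map_add, map_sub, hEuler, hceq] at this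
    linarith
  have h3 : φ (ζ + (ζ - η)) = φ ζ + φ (ζ - η) := by
    have := htri ζ (ζ - η)
    rw [hζ, hφeq] at this ⊢
    linarith
  have h4 := hstrict ζ (ζ - η) h3
  rw [hζ, hφeq, one_smul, one_smul] at h4
  have hη0 : η = 0 := by
    have h5 : ζ - (ζ - η) = 0 := by nth_rewrite 1 [h4]; abel
    simpa using h5
  rw [hη0, (hzero 0).2 rfl] at hη
  norm_num at hη

theorem stmt12 {n : ℕ} (φ : Euc n → ℝ) (hφ : StrictlyConvexNorm φ)
    (hsm : ContDiffOn ℝ 1 φ {(0 : Euc n)}ᶜ)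
    (ξ : Euc n → Euc n) (hξ : ∀ x, ξ x = (φ x)⁻¹ • x)
    (π : Euc n → (Euc n →L[ℝ] Euc n)) (hπ : ∀ η : Euc n, π η = fderiv ℝ ξ η)
    (opφ : (Euc n →L[ℝ] Euc n) → ℝ)
    (hop : ∀ L : Euc n →L[ℝ] Euc n, opφ L = sSup {r | ∃ x : Euc n, φ x ≤ 1 ∧ r = φ (L x)})
    (ε : ℝ) (hε0 : 0 < ε) (hε1 : ε < 1) (R : ℝ)
    (hR : R = sSup {r : ℝ | 0 < r ∧ r < 1 ∧ ∀ η ζ : Euc n, φ η = 1 → φ ζ = 1 →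
      φ (η - ζ) ≤ r → opφ (π η - π ζ) ≤ 1 - ε}) :
    ∀ η : Euc n, φ η = 1 →
      Set.InjOn (π η) {ζ : Euc n | φ ζ = 1 ∧ φ (ζ - η) ≤ R} := by
  intro η hη ζ₁ h₁ ζ₂ h₂ heq
  obtain ⟨hzero, hhomog, htri⟩ := hφ.1
  have hφ0 : φ 0 = 0 := (hzero 0).2 rfl
  have hR1 : R ≤ 1 := by
    rw [hR]
    exact Real.sSup_le (fun r hr => hr.2.1.le) one_pos.le
  have hne0 : ∀ x : Euc n, φ x = 1 → x ≠ 0 := by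
    intro x hx h
    rw [h, hφ0] at hx; norm_num at hx
  have hdiff : ∀ x : Euc n, x ≠ 0 → HasFDerivAt φ (fderiv ℝ φ x) x := fun x hx =>
    ((hsm.differentiableOn one_ne_zero x hx).differentiableAt
      (isOpen_compl_singleton.mem_nhds hx)).hasFDerivAt
  have hη0 : η ≠ 0 := hne0 η hη
  -- formula for π η
  have hπv : ∀ v, (π η) v = v - (fderiv ℝ φ η v) • η := by
    have hDη := hdiff η hη0
    have hφη : φ η ≠ 0 := by rw [hη]; norm_num
    have hinv : HasFDerivAt (fun x => (φ x)⁻¹)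
        ((-ContinuousLinearMap.mulLeftRight ℝ ℝ (φ η)⁻¹ (φ η)⁻¹).comp (fderiv ℝ φ η)) η :=
      (hasFDerivAt_inv' hφη).comp η hDη
    have hsmul := hinv.smul (hasFDerivAt_id η)
    simp only [id] at hsmul
    have hξeq : ξ = fun x => (φ x)⁻¹ • x := funext hξ
    have hsmul' : HasFDerivAt (fun x => (φ x)⁻¹ • x) _ η := hsmul
    rw [hπ, hξeq, hsmul'.fderiv]
    intro v
    simp [hη, ContinuousLinearMap.smulRight_apply]
    module
  -- kernel step
  have hker : ζ₁ - ζ₂ = (fderiv ℝ φ η ζ₁ - fderiv ℝ φ η ζ₂) • η := by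
    have h := heq
    rw [hπv ζ₁, hπv ζ₂, sub_eq_sub_iff_sub_eq_sub] at h
    rw [sub_smul]; exact h
  set t : ℝ := fderiv ℝ φ η ζ₁ - fderiv ℝ φ η ζ₂ with htdef
  by_contra hcne
  have ht0 : t ≠ 0 := by
    intro h
    rw [h, zero_smul, sub_eq_zero] at hker
    exact hcne hker
  rcases ht0.lt_or_gt with hlt | hgt
  · -- t < 0 : ζ₂ = ζ₁ + (-t) • η
    refine keyAux' ⟨⟨hzero, hhomog, htri⟩, hφ.2⟩ (hdiff ζ₁ (hne0 ζ₁ h₁.1)) hη h₁.1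
      (neg_pos.2 hlt) ?_ (le_trans h₁.2 hR1)
    have : ζ₁ + (-t) • η = ζ₂ := by
      rw [neg_smul, ← hker]; abel
    rw [this]; exact h₂.1
  · -- t > 0 : ζ₁ = ζ₂ + t • η
    refine keyAux' ⟨⟨hzero, hhomog, htri⟩, hφ.2⟩ (hdiff ζ₂ (hne0 ζ₂ h₂.1)) hη h₂.1
      hgt ?_ (le_trans h₂.2 hR1)
    have : ζ₂ + t • η = ζ₁ := by rw [← hker]; abel
    rw [this]; exact h₁.1
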